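/- There exist a finite MDP with three states and two actions — i.e., sets S and A with |S| = 3 and |A| = 2, a transition kernel T, an initial distribution p₀ — and a discount factor γ ∈ (0,1), such that every deterministic stationary policy π (one for which π(·|s) is a point mass for each state s) satisfies H(d̄^π) < sup_{π'} H(d̄^{π'}), where the supremum is over all stationary Markov policies; i.e., no deterministic stationary policy maximizes the state entropy, so any state-entropy-maximizing stationary Markov policy must be stochastic. -/

import Mathlib

open scoped BigOperators

/-- The set of stationary Markov policies. -/
def policySet (S A : Type*) [Fintype A] : Set (S → A → ℝ) :=
  {π | (∀ s a, 0 ≤ π s a) ∧ ∀ s, ∑ a, π s a = 1}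

/-- The transition matrix induced by a policy: `P_π(s,s') = ∑_a π(a|s) T(s'|s,a)`. -/
noncomputable def Pmat {S A : Type*} [Fintype A] (T : S → A → S → ℝ)
    (π : S → A → ℝ) : Matrix S S ℝ :=
  fun s s' => ∑ a, π s a * T s a s'

/-- The discounted state occupancy `d̄^π = (1−γ) ∑_t γ^t (P_πᵀ)^t p₀`. -/
noncomputable def dbar {S A : Type*} [Fintype S] [DecidableEq S] [Fintype A]
    (γ : ℝ) (p0 : S → ℝ) (T : S → A → S → ℝ) (π : S → A → ℝ) (s : S) : ℝ :=
  (1 - γ) * ∑' t : ℕ, γ ^ t * ((Pmat T π).transpose ^ t).mulVec p0 s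

/-- Shannon entropy of a state distribution, with the convention `0 · log 0 = 0`
(automatic since `Real.log 0 = 0`). -/
noncomputable def stateEntropy {S : Type*} [Fintype S] (d : S → ℝ) : ℝ :=
  ∑ s, -(d s * Real.log (d s))

def Tk : Fin 3 → Fin 2 → Fin 3 → ℝ :=
  ![![![0,1,0],![0,0,1]], ![![0,1,0],![0,1,0]], ![![0,0,1],![0,0,1]]]

def pk : Fin 3 → ℝ := ![1,0,0]

lemma step1 (π : Fin 3 → Fin 2 → ℝ) :
    (Pmat Tk π).transpose.mulVec pk = ![0, π 0 0, π 0 1] := by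
  funext s
  fin_cases s <;>
    simp [Matrix.mulVec, Matrix.transpose, Pmat, Tk, pk, Fin.sum_univ_three,
      Fin.sum_univ_two, dotProduct]

lemma step2 (π : Fin 3 → Fin 2 → ℝ) (hπ : ∀ s, π s 0 + π s 1 = 1) :
    (Pmat Tk π).transpose.mulVec ![0, π 0 0, π 0 1] = ![0, π 0 0, π 0 1] := by
  funext s
  fin_cases s <;>
    simp [Matrix.mulVec, Matrix.transpose, Pmat, Tk, Fin.sum_univ_three,
      Fin.sum_univ_two, dotProduct, hπ 1, hπ 2]

lemma powvec (π : Fin 3 → Fin 2 → ℝ) (hπ : ∀ s, π s 0 + π s 1 = 1) (t : ℕ) :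
    ((Pmat Tk π).transpose ^ (t+1)).mulVec pk = ![0, π 0 0, π 0 1] := by
  induction t with
  | zero => simpa using step1 π
  | succ n ih =>
      rw [pow_succ', ← Matrix.mulVec_mulVec, ih, step2 π hπ]

lemma dbar_eq (π : Fin 3 → Fin 2 → ℝ) (hπ : ∀ s, π s 0 + π s 1 = 1) :
    dbar (1/2) pk Tk π = ![1/2, π 0 0 / 2, π 0 1 / 2] := by
  funext s
  have hf : ∀ t : ℕ, ((1:ℝ)/2) ^ (t+1) * ((Pmat Tk π).transpose ^ (t+1)).mulVec pk s
      = (![0, π 0 0, π 0 1] s / 2) * (1/2)^t := by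
    intro t; rw [powvec π hπ]; ring
  have hgeo : Summable (fun t : ℕ => (![0, π 0 0, π 0 1] s / 2) * ((1:ℝ)/2)^t) :=
    (summable_geometric_of_lt_one (by norm_num) (by norm_num)).mul_left _
  have hsum1 : Summable (fun t : ℕ => ((1:ℝ)/2) ^ (t+1) * ((Pmat Tk π).transpose ^ (t+1)).mulVec pk s) := by
    exact hgeo.congr fun t => (hf t).symm
  have hsum : Summable (fun t : ℕ => ((1:ℝ)/2) ^ t * ((Pmat Tk π).transpose ^ t).mulVec pk s) :=
    (summable_nat_add_iff 1).mp hsum1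
  have htsum : ∑' t : ℕ, ((1:ℝ)/2) ^ t * ((Pmat Tk π).transpose ^ t).mulVec pk s
      = pk s + ![0, π 0 0, π 0 1] s := by
    rw [Summable.tsum_eq_zero_add hsum]
    have : ∑' t : ℕ, ((1:ℝ)/2) ^ (t+1) * ((Pmat Tk π).transpose ^ (t+1)).mulVec pk s
        = ![0, π 0 0, π 0 1] s := by
      rw [tsum_congr hf, tsum_mul_left, tsum_geometric_of_lt_one (by norm_num) (by norm_num)]
      norm_num
    rw [this]; simp
  rw [dbar, htsum]
  fin_cases s <;> simp [pk] <;> ring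

lemma nml_le_one (x : ℝ) (hx : 0 ≤ x) : -(x * Real.log x) ≤ 1 := by
  rcases eq_or_lt_of_le hx with h | h
  · simp [← h]
  · have h1 : Real.log x⁻¹ ≤ x⁻¹ - 1 := Real.log_le_sub_one_of_pos (by positivity)
    have h2 : -(x * Real.log x) = x * Real.log x⁻¹ := by rw [Real.log_inv]; ring
    rw [h2]
    calc x * Real.log x⁻¹ ≤ x * (x⁻¹ - 1) := by nlinarith
      _ = 1 - x := by field_simp
      _ ≤ 1 := by linarith

lemma ent_bdd : ∀ y ∈ (fun π' => stateEntropy (dbar (1/2) pk Tk π')) ''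
    policySet (Fin 3) (Fin 2), y ≤ 3 := by
  rintro y ⟨π, hπ, rfl⟩
  have hs : ∀ s, π s 0 + π s 1 = 1 := fun s => by
    have := hπ.2 s; rwa [Fin.sum_univ_two] at this
  simp only []
  rw [dbar_eq π hs, stateEntropy, Fin.sum_univ_three]
  have h0 := hπ.1 0 0
  have h1 := hπ.1 0 1
  have b1 := nml_le_one ((1:ℝ)/2) (by norm_num)
  have b2 := nml_le_one (π 0 0 / 2) (by linarith)
  have b3 := nml_le_one (π 0 1 / 2) (by linarith)
  simp only [Matrix.cons_val_zero, Matrix.cons_val_one, Matrix.head_cons,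
    Matrix.cons_val_two, Matrix.tail_cons]
  linarith

lemma ent_mem : (3/2 : ℝ) * Real.log 2 ∈
    (fun π' => stateEntropy (dbar (1/2) pk Tk π')) '' policySet (Fin 3) (Fin 2) := by
  refine ⟨fun _ _ => 1/2, ⟨fun s a => by norm_num, fun s => by simp [Fin.sum_univ_two]⟩, ?_⟩
  have hs : ∀ s : Fin 3, (fun (_ : Fin 3) (_ : Fin 2) => (1:ℝ)/2) s 0
      + (fun (_ : Fin 3) (_ : Fin 2) => (1:ℝ)/2) s 1 = 1 := fun s => by norm_num
  simp only []
  rw [dbar_eq _ hs, stateEntropy, Fin.sum_univ_three]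
  simp only [Matrix.cons_val_zero, Matrix.cons_val_one, Matrix.head_cons,
    Matrix.cons_val_two, Matrix.tail_cons]
  rw [show ((1:ℝ)/2)/2 = 4⁻¹ by norm_num, show (1:ℝ)/2 = 2⁻¹ by norm_num,
    Real.log_inv, Real.log_inv, show (4:ℝ) = 2^2 by norm_num, Real.log_pow]
  push_cast
  ring


theorem stmt17 :
    ∃ (T : Fin 3 → Fin 2 → Fin 3 → ℝ) (p0 : Fin 3 → ℝ) (γ : ℝ),
      (∀ s a s', 0 ≤ T s a s') ∧ (∀ s a, ∑ s', T s a s' = 1) ∧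
      (∀ s, 0 ≤ p0 s) ∧ (∑ s, p0 s = 1) ∧
      γ ∈ Set.Ioo (0:ℝ) 1 ∧
      ∀ π ∈ policySet (Fin 3) (Fin 2),
        (∀ s, ∃ a, π s a = 1 ∧ ∀ b, b ≠ a → π s b = 0) →
          stateEntropy (dbar γ p0 T π)
            < sSup ((fun π' => stateEntropy (dbar γ p0 T π')) ''
                policySet (Fin 3) (Fin 2)) := by
  refine ⟨Tk, pk, 1/2, ?_, ?_, ?_, ?_, ⟨by norm_num, by norm_num⟩, ?_⟩
  · intro s a s'; fin_cases s <;> fin_cases a <;> fin_cases s' <;> norm_num [Tk]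
  · intro s a; fin_cases s <;> fin_cases a <;> norm_num [Tk, Fin.sum_univ_three, Matrix.cons_val_two, Matrix.tail_cons, Matrix.head_cons]
  · intro s; fin_cases s <;> norm_num [pk]
  · norm_num [pk, Fin.sum_univ_three, Matrix.cons_val_two, Matrix.tail_cons, Matrix.head_cons]
  · intro π hπ hdet
    have hs : ∀ s, π s 0 + π s 1 = 1 := fun s => by
      have := hπ.2 s; rwa [Fin.sum_univ_two] at this
    have hlog : (0:ℝ) < Real.log 2 := Real.log_pos (by norm_num)
    have hE : stateEntropy (dbar (1/2) pk Tk π) = Real.log 2 := by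
      rw [dbar_eq π hs, stateEntropy, Fin.sum_univ_three]
      simp only [Matrix.cons_val_zero, Matrix.cons_val_one, Matrix.head_cons,
        Matrix.cons_val_two, Matrix.tail_cons]
      obtain ⟨a, ha1, ha0⟩ := hdet 0
      have hcase : (π 0 0 = 1 ∧ π 0 1 = 0) ∨ (π 0 0 = 0 ∧ π 0 1 = 1) := by
        fin_cases a
        · exact Or.inl ⟨ha1, ha0 1 (by decide)⟩
        · exact Or.inr ⟨ha0 0 (by decide), ha1⟩
      rcases hcase with ⟨h1, h2⟩ | ⟨h1, h2⟩ <;>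
        rw [h1, h2] <;>
        norm_num <;> rw [show Real.log ((1:ℝ)/2) = -Real.log 2 by rw [one_div, Real.log_inv]] <;> ring
    rw [hE]
    have hle : (3/2 : ℝ) * Real.log 2 ≤
        sSup ((fun π' => stateEntropy (dbar (1/2) pk Tk π')) '' policySet (Fin 3) (Fin 2)) :=
      le_csSup ⟨3, ent_bdd⟩ ent_mem
    linarith
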